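/- arXiv:math/0108169 — 7 statements merged into one kernel-verified Lean document; each statement's English description precedes it below -/
import Mathlib

section
/- For the lattice G = {(p₁ + q₁ k, p₂ + q₂ m) : k, m ∈ ℤ} with q₁, q₂ > 0, the explicit error bound |N(G,T) − (π/(q₁q₂))T²| ≤ (π/(q₁q₂))(2T√(q₁²+q₂²) + q₁² + q₂²) + C holds in the case p₁ = p₂ = 0 (where one may take C = 0), for all T > 0. -/
open Real MeasureTheory Set
open scoped ENNReal

lemma key_ineq (u w c e A B : ℝ) (hA : 0 ≤ A) (hB : 0 ≤ B)
    (h1 : u^2 + w^2 ≤ A^2) (h2 : c^2 + e^2 ≤ B^2) :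
    (u+c)^2 + (w+e)^2 ≤ (A+B)^2 := by
  have h3 : (u*c + w*e)^2 ≤ (A*B)^2 := by
    nlinarith [sq_nonneg (u*e - w*c), sq_nonneg u, sq_nonneg w, sq_nonneg c, sq_nonneg e,
      mul_le_mul h1 h2 (by positivity) (by positivity)]
  have h4 : u*c + w*e ≤ A*B := by
    calc u*c + w*e ≤ |u*c + w*e| := le_abs_self _
    _ = Real.sqrt ((u*c+w*e)^2) := (Real.sqrt_sq_eq_abs _).symm
    _ ≤ Real.sqrt ((A*B)^2) := Real.sqrt_le_sqrt h3
    _ = A*B := Real.sqrt_sq (mul_nonneg hA hB)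
  nlinarith

lemma cell_unique (q x : ℝ) (hq : 0 < q) {k k' : ℤ}
    (h1 : q*k < x) (h2 : x ≤ q*k+q) (h3 : q*k' < x) (h4 : x ≤ q*k'+q) : k = k' := by
  have hk : (k:ℝ) < k' + 1 := by
    have : q * k < q * (k'+1) := by push_cast [mul_add]; linarith
    exact_mod_cast lt_of_mul_lt_mul_left this hq.le
  have hk' : (k':ℝ) < k + 1 := by
    have : q * k' < q * (k+1) := by push_cast [mul_add]; linarith
    exact_mod_cast lt_of_mul_lt_mul_left this hq.le
  have : k < k' + 1 := by exact_mod_cast hk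
  have : k' < k + 1 := by exact_mod_cast hk'
  omega

lemma volume_disc (r : ℝ) (hr : 0 ≤ r) :
    volume {p : ℝ × ℝ | p.1^2 + p.2^2 ≤ r^2} = ENNReal.ofReal (π * r^2) := by
  have hset : Complex.measurableEquivRealProd ⁻¹' {p : ℝ × ℝ | p.1^2 + p.2^2 ≤ r^2}
      = Metric.closedBall (0:ℂ) r := by
    ext z
    simp only [Set.mem_preimage, Complex.measurableEquivRealProd_apply, Set.mem_setOf_eq,
      Metric.mem_closedBall, Complex.dist_eq, sub_zero]
    have habs : z.re^2 + z.im^2 = ‖z‖ ^ 2 := by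
      rw [Complex.sq_norm, Complex.normSq_apply]; ring
    rw [habs]
    constructor
    · intro h
      have := Real.sqrt_le_sqrt h
      rwa [Real.sqrt_sq (norm_nonneg z), Real.sqrt_sq hr] at this
    · intro h
      have : ‖z‖ ^ 2 ≤ r ^ 2 := by nlinarith [norm_nonneg z]
      linarith [this]
  have hm : NullMeasurableSet {p : ℝ × ℝ | p.1^2 + p.2^2 ≤ r^2} (volume) := by
    apply (MeasurableSet.nullMeasurableSet ?_)
    exact measurableSet_le (by fun_prop) measurable_const
  rw [← Complex.volume_preserving_equiv_real_prod.measure_preimage hm, hset,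
    Complex.volume_closedBall]
  rw [← ENNReal.ofReal_pow hr, ← ENNReal.ofReal_coe_nnreal, ← ENNReal.ofReal_mul (by positivity)]
  congr 1
  simp [NNReal.coe_real_pi]
  ring

/-- the cell attached to a lattice point -/
def cell (q₁ q₂ : ℝ) (v : ℤ × ℤ) : Set (ℝ × ℝ) :=
  Ioc (q₁*v.1) (q₁*v.1+q₁) ×ˢ Ioc (q₂*v.2) (q₂*v.2+q₂)

lemma cell_measurable (q₁ q₂ : ℝ) (v : ℤ × ℤ) : MeasurableSet (cell q₁ q₂ v) :=
  measurableSet_Ioc.prod measurableSet_Ioc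

lemma cell_volume {q₁ q₂ : ℝ} (hq₁ : 0 ≤ q₁) (v : ℤ × ℤ) :
    volume (cell q₁ q₂ v) = ENNReal.ofReal (q₁ * q₂) := by
  rw [cell, Measure.volume_eq_prod, Measure.prod_prod, Real.volume_Ioc, Real.volume_Ioc,
    add_sub_cancel_left, add_sub_cancel_left, ENNReal.ofReal_mul hq₁]

lemma abs_le_of_sq_le' {x y : ℝ} (hy : 0 ≤ y) (h : x^2 ≤ y^2) : |x| ≤ y := by
  rw [← Real.sqrt_sq_eq_abs, ← Real.sqrt_sq hy]; exact Real.sqrt_le_sqrt h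

/-- Number of points of the lattice `q₁ℤ × q₂ℤ` in the closed disc of radius `T`. -/
noncomputable def latticeCount0 (q₁ q₂ : ℝ) (T : ℝ) : ℕ :=
  Nat.card {v : ℤ × ℤ // (q₁ * v.1) ^ 2 + (q₂ * v.2) ^ 2 ≤ T ^ 2}

set_option maxHeartbeats 1000000 in
/-- explicit Gauss error bound for the centered lattice
(`p₁ = p₂ = 0`, so one may take `C = 0`), for all `T > 0`. -/
theorem lattice_count_error_bound (q₁ q₂ : ℝ) (hq₁ : 0 < q₁) (hq₂ : 0 < q₂)
    (T : ℝ) (hT : 0 < T) :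
    |(latticeCount0 q₁ q₂ T : ℝ) - π / (q₁ * q₂) * T ^ 2| ≤
      π / (q₁ * q₂) * (2 * T * Real.sqrt (q₁ ^ 2 + q₂ ^ 2) + q₁ ^ 2 + q₂ ^ 2) := by
  set d := Real.sqrt (q₁^2+q₂^2) with hd_def
  have hd : 0 < d := Real.sqrt_pos.2 (by positivity)
  have hd2 : d^2 = q₁^2+q₂^2 := Real.sq_sqrt (by positivity)
  set S : Set (ℤ×ℤ) := {v | (q₁*v.1)^2 + (q₂*v.2)^2 ≤ T^2} with hS_def
  set K : ℤ := max ⌈T/q₁⌉ ⌈T/q₂⌉ with hK_def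
  have hSsub : S ⊆ (Icc (-K) K : Set ℤ) ×ˢ (Icc (-K) K : Set ℤ) := by
    rintro ⟨k,m⟩ hv
    simp only [hS_def, mem_setOf_eq] at hv
    have key : ∀ (q : ℝ) (j : ℤ), 0 < q → (q*(j:ℝ))^2 ≤ T^2 → T/q ≤ (K:ℝ) → |j| ≤ K := by
      intro q j hq h1 hK
      have h2 : |q*(j:ℝ)| ≤ T := abs_le_of_sq_le' hT.le h1
      rw [abs_mul, abs_of_pos hq] at h2
      have h3 : |(j:ℝ)| ≤ T/q := (le_div_iff₀ hq).2 (by linarith [h2])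
      have h4 : |(j:ℝ)| ≤ (K:ℝ) := h3.trans hK
      have h5 : ((|j|:ℤ):ℝ) ≤ (K:ℝ) := by rw [Int.cast_abs]; exact h4
      exact_mod_cast h5
    have hK1 : T/q₁ ≤ (K:ℝ) := by
      calc T/q₁ ≤ (⌈T/q₁⌉:ℝ) := Int.le_ceil _
      _ ≤ (K:ℝ) := by exact_mod_cast le_max_left _ _
    have hK2 : T/q₂ ≤ (K:ℝ) := by
      calc T/q₂ ≤ (⌈T/q₂⌉:ℝ) := Int.le_ceil _
      _ ≤ (K:ℝ) := by exact_mod_cast le_max_right _ _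
    have hb1 := key q₁ k hq₁ (by nlinarith [sq_nonneg (q₂*(m:ℝ))]) hK1
    have hb2 := key q₂ m hq₂ (by nlinarith [sq_nonneg (q₁*(k:ℝ))]) hK2
    exact ⟨mem_Icc.2 (abs_le.1 hb1), mem_Icc.2 (abs_le.1 hb2)⟩
  have hSfin : S.Finite := ((Set.finite_Icc (-K) K).prod (Set.finite_Icc (-K) K)).subset hSsub
  have hNcard : latticeCount0 q₁ q₂ T = hSfin.toFinset.card := by
    have h1 : latticeCount0 q₁ q₂ T = Nat.card S := rfl
    rw [h1, Nat.card_coe_set_eq, Set.ncard_eq_toFinset_card S hSfin]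
  set F := hSfin.toFinset with hF_def
  have hdisj : (↑F : Set (ℤ×ℤ)).PairwiseDisjoint (cell q₁ q₂) := by
    intro v _ w _ hvw
    refine Set.disjoint_left.2 ?_
    rintro x hxv hxw
    simp only [cell, Set.mem_prod, mem_Ioc] at hxv hxw
    exact hvw (Prod.ext (cell_unique q₁ x.1 hq₁ hxv.1.1 hxv.1.2 hxw.1.1 hxw.1.2)
      (cell_unique q₂ x.2 hq₂ hxv.2.1 hxv.2.2 hxw.2.1 hxw.2.2))
  set U := ⋃ v ∈ F, cell q₁ q₂ v with hU_def
  have hUvol : volume U = (F.card : ℝ≥0∞) * ENNReal.ofReal (q₁*q₂) := by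
    rw [hU_def, measure_biUnion_finset hdisj (fun v _ => cell_measurable q₁ q₂ v)]
    simp [cell_volume hq₁.le, Finset.sum_const, nsmul_eq_mul]
  have hUsub : U ⊆ {p : ℝ×ℝ | p.1^2+p.2^2 ≤ (T+d)^2} := by
    intro x hx
    simp only [hU_def, mem_iUnion, exists_prop] at hx
    obtain ⟨v, hvF, hxv⟩ := hx
    have hvS : v ∈ S := (hSfin.mem_toFinset).1 hvF
    simp only [hS_def, mem_setOf_eq] at hvS
    simp only [cell, Set.mem_prod, mem_Ioc] at hxv
    have hb : (x.1 - q₁*v.1)^2 + (x.2 - q₂*v.2)^2 ≤ d^2 := by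
      rw [hd2]; nlinarith [hxv.1.1, hxv.1.2, hxv.2.1, hxv.2.2]
    have h := key_ineq (q₁*v.1) (q₂*v.2) (x.1 - q₁*v.1) (x.2 - q₂*v.2) T d hT.le hd.le hvS hb
    have e1 : q₁*(v.1:ℝ) + (x.1 - q₁*v.1) = x.1 := by ring
    have e2 : q₂*(v.2:ℝ) + (x.2 - q₂*v.2) = x.2 := by ring
    rw [e1, e2] at h
    exact h
  have hupper : (F.card : ℝ) * (q₁*q₂) ≤ π * (T+d)^2 := by
    have h := (measure_mono hUsub).trans_eq (volume_disc (T+d) (by positivity))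
    rw [hUvol, ← ENNReal.ofReal_natCast, ← ENNReal.ofReal_mul (by positivity)] at h
    exact (ENNReal.ofReal_le_ofReal_iff (by positivity)).1 h
  have hFnn : (0:ℝ) ≤ (F.card : ℝ) := Nat.cast_nonneg _
  have hlow : π * T^2 - π * (2*T*d + d^2) ≤ (F.card : ℝ) * (q₁*q₂) := by
    obtain hTd | hTd := lt_or_ge T d
    · have hTd2 : T^2 ≤ d^2 := by nlinarith
      have h1 : π*T^2 ≤ π*d^2 := mul_le_mul_of_nonneg_left hTd2 pi_pos.le
      have h2 : 0 ≤ π*(2*T*d) := by positivity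
      have h3 : 0 ≤ (F.card:ℝ)*(q₁*q₂) := by positivity
      nlinarith [h1, h2, h3]
    · have hsub2 : {p : ℝ×ℝ | p.1^2+p.2^2 ≤ (T-d)^2} ⊆ U := by
        intro x hx
        simp only [mem_setOf_eq] at hx
        set k : ℤ := ⌈x.1/q₁⌉ - 1 with hk_def
        set m : ℤ := ⌈x.2/q₂⌉ - 1 with hm_def
        have step : ∀ (q y : ℝ), 0 < q → q*((⌈y/q⌉:ℝ) - 1) < y ∧ y ≤ q*((⌈y/q⌉:ℝ) - 1) + q := by
          intro q y hq
          constructor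
          · have h1 : (⌈y/q⌉:ℝ) - 1 < y/q := by linarith [Int.ceil_lt_add_one (y/q)]
            calc q*((⌈y/q⌉:ℝ) - 1) < q*(y/q) := mul_lt_mul_of_pos_left h1 hq
            _ = y := by field_simp
          · have h1 : y/q ≤ ((⌈y/q⌉:ℝ) - 1) + 1 := by linarith [Int.le_ceil (y/q)]
            calc y = q*(y/q) := by field_simp
            _ ≤ q*(((⌈y/q⌉:ℝ) - 1) + 1) := mul_le_mul_of_nonneg_left h1 hq.le
            _ = q*((⌈y/q⌉:ℝ) - 1) + q := by ring
        have hx1 : q₁*(k:ℝ) < x.1 ∧ x.1 ≤ q₁*(k:ℝ) + q₁ := by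
          have := step q₁ x.1 hq₁
          push_cast [hk_def]
          exact this
        have hx2 : q₂*(m:ℝ) < x.2 ∧ x.2 ≤ q₂*(m:ℝ) + q₂ := by
          have := step q₂ x.2 hq₂
          push_cast [hm_def]
          exact this
        have hmem : ((k,m) : ℤ×ℤ) ∈ S := by
          simp only [hS_def, mem_setOf_eq]
          have hb : (q₁*(k:ℝ) - x.1)^2 + (q₂*(m:ℝ) - x.2)^2 ≤ d^2 := by
            rw [hd2]; nlinarith [hx1.1, hx1.2, hx2.1, hx2.2]
          have h := key_ineq x.1 x.2 (q₁*(k:ℝ) - x.1) (q₂*(m:ℝ) - x.2) (T-d) d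
            (by linarith) hd.le hx hb
          have e : T - d + d = T := by ring
          rw [e] at h
          calc (q₁*((k,m).1:ℝ))^2+(q₂*((k,m).2:ℝ))^2
              = (x.1+(q₁*(k:ℝ) - x.1))^2+(x.2+(q₂*(m:ℝ) - x.2))^2 := by ring
          _ ≤ T^2 := h
        simp only [hU_def, mem_iUnion, exists_prop]
        refine ⟨(k,m), hSfin.mem_toFinset.2 hmem, ?_⟩
        simp only [cell, Set.mem_prod, mem_Ioc]
        exact ⟨⟨hx1.1, hx1.2⟩, ⟨hx2.1, hx2.2⟩⟩
      have h : volume {p : ℝ×ℝ | p.1^2+p.2^2 ≤ (T-d)^2} ≤ volume U := measure_mono hsub2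
      rw [volume_disc (T-d) (by linarith), hUvol, ← ENNReal.ofReal_natCast,
        ← ENNReal.ofReal_mul (by positivity)] at h
      have h2 : π*(T-d)^2 ≤ (F.card:ℝ)*(q₁*q₂) :=
        (ENNReal.ofReal_le_ofReal_iff (by positivity)).1 h
      have hexp : π*(T-d)^2 = π*T^2 - π*(2*T*d) + π*d^2 := by ring
      have h2d : 0 ≤ π*d^2 := by positivity
      linarith
  rw [hNcard]
  have hc : (0:ℝ) < q₁*q₂ := by positivity
  have hBe : π/(q₁*q₂)*(2*T*d + q₁^2 + q₂^2) = π/(q₁*q₂)*(2*T*d+d^2) := by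
    rw [hd2]; ring
  have hlo' : π/(q₁*q₂)*T^2 - π/(q₁*q₂)*(2*T*d+d^2) ≤ (F.card:ℝ) := by
    rw [div_mul_eq_mul_div, div_mul_eq_mul_div, ← sub_div, div_le_iff₀ hc]
    linarith [hlow]
  have hhi' : (F.card:ℝ) ≤ π/(q₁*q₂)*T^2 + π/(q₁*q₂)*(2*T*d+d^2) := by
    rw [div_mul_eq_mul_div, div_mul_eq_mul_div, ← add_div, le_div_iff₀ hc]
    have hexp : π*(T+d)^2 = π*T^2 + π*(2*T*d+d^2) := by ring
    linarith [hupper]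
  rw [abs_le]
  constructor
  · linarith [hBe, hlo']
  · linarith [hBe, hhi']
end

section
/- For every positive integer n, the point distribution G_{I^n} = ⋃_{k ∈ I^n} {(nℤ + k) × nℤ} is complete with respect to ℤ²: every visible point of ℤ² that has a nonzero scalar multiple lying in G_{I^n} is itself a visible point of G_{I^n}, and moreover every visible point of G_{I^n} is visible in ℤ². -/
open Filter Real Topology

/-- A point `p` of a point distribution `G ⊆ ℤ²` is *visible* if no point `q ∈ G`
satisfies `q = λ • p` (in `ℝ²`) with `0 < |λ| < 1`. -/
def VisiblePt (G : Set (ℤ × ℤ)) (p : ℤ × ℤ) : Prop :=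
  p ∈ G ∧ ¬∃ q ∈ G, ∃ r : ℝ, 0 < |r| ∧ |r| < 1 ∧
    ((q.1 : ℝ), (q.2 : ℝ)) = (r * p.1, r * p.2)

/-- `N(S,T)`: number of points of `S ⊆ ℤ² ⊆ ℝ²` in the closed disc of radius `T`
around the origin. -/
noncomputable def countIn (S : Set (ℤ × ℤ)) (T : ℝ) : ℕ :=
  Nat.card {v : ℤ × ℤ // v ∈ S ∧ (v.1 : ℝ) ^ 2 + (v.2 : ℝ) ^ 2 ≤ T ^ 2}

/-- The point distribution `G_{I^n} = ⋃_{k ∈ I^n} ((nℤ + k) × nℤ)` where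
`I^n = {k ∈ {1,…,n−1} : gcd(k,n) = 1}`. -/
def GIn (n : ℕ) : Set (ℤ × ℤ) :=
  {v | ∃ k : ℕ, 1 ≤ k ∧ k < n ∧ Nat.gcd k n = 1 ∧
    (n : ℤ) ∣ (v.1 - k) ∧ (n : ℤ) ∣ v.2}

/-- If `p` is primitive, any real scaling of `p` landing in `ℤ²` is an integer
multiple of `p`. -/
lemma scalar_int {p q : ℤ × ℤ} (hp : IsCoprime p.1 p.2) {r : ℝ}
    (h1 : (q.1:ℝ) = r * p.1) (h2 : (q.2:ℝ) = r * p.2) :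
    ∃ m : ℤ, (m:ℝ) = r ∧ q.1 = m * p.1 ∧ q.2 = m * p.2 := by
  obtain ⟨a, b, hab⟩ := hp
  have habR : (a:ℝ) * p.1 + b * p.2 = 1 := by exact_mod_cast congrArg (Int.cast : ℤ → ℝ) hab
  refine ⟨a * q.1 + b * q.2, ?_, ?_, ?_⟩
  · push_cast
    rw [h1, h2]
    linear_combination r * habR
  · have : (q.1:ℝ) = ((a * q.1 + b * q.2 : ℤ) : ℝ) * p.1 := by
      push_cast; rw [h1, h2]; linear_combination (-(r * (p.1:ℝ))) * habR
    exact_mod_cast this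
  · have : (q.2:ℝ) = ((a * q.1 + b * q.2 : ℤ) : ℝ) * p.2 := by
      push_cast; rw [h1, h2]; linear_combination (-(r * (p.2:ℝ))) * habR
    exact_mod_cast this

/-- Membership in `GIn n` for `n ≥ 2`. -/
lemma mem_GIn_iff {n : ℕ} (hn : 2 ≤ n) {v : ℤ × ℤ} :
    v ∈ GIn n ↔ IsCoprime v.1 (n:ℤ) ∧ (n:ℤ) ∣ v.2 := by
  constructor
  · rintro ⟨k, hk1, hk2, hk3, ⟨t, ht⟩, h2⟩
    refine ⟨?_, h2⟩
    have hk : IsCoprime (k:ℤ) (n:ℤ) := by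
      rw [Int.isCoprime_iff_gcd_eq_one]
      simpa using hk3
    have hv : v.1 = (k:ℤ) + (n:ℤ) * t := by linarith
    rw [hv]
    exact hk.add_mul_left_left t
  · rintro ⟨h1, h2⟩
    have hn0 : (0:ℤ) < n := by exact_mod_cast Nat.lt_of_lt_of_le two_pos hn
    set m : ℤ := v.1 % (n:ℤ) with hm
    have hm0 : 0 ≤ m := Int.emod_nonneg _ (by positivity)
    have hmlt : m < n := Int.emod_lt_of_pos _ hn0
    have hdiv : (n:ℤ) ∣ v.1 - m := Int.dvd_self_sub_of_emod_eq rfl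
    have hcop : IsCoprime m (n:ℤ) := by
      obtain ⟨t, ht⟩ := hdiv
      have : m = v.1 + (n:ℤ) * (-t) := by linarith
      rw [this]
      exact h1.add_mul_left_left (-t)
    refine ⟨m.toNat, ?_, ?_, ?_, ?_, h2⟩
    · by_contra h
      have hm0' : m = 0 := by omega
      have hd : (n:ℤ) ∣ v.1 := by
        have := hdiv; rw [hm0'] at this; simpa using this
      have hu : IsUnit (n:ℤ) := h1.symm.isUnit_of_dvd' (dvd_refl _) hd
      rw [Int.isUnit_iff] at hu
      omega
    · omega
    · have heq : (m.toNat : ℤ) = m := Int.toNat_of_nonneg hm0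
      have h := Int.isCoprime_iff_gcd_eq_one.mp hcop
      rw [← heq, Int.gcd_natCast_natCast] at h
      exact h
    · have heq : (m.toNat : ℤ) = m := Int.toNat_of_nonneg hm0
      rw [heq]; exact hdiv

/-- A primitive point has no scaled-down lattice companion in any `G`. -/
lemma coprime_no_shrink {G : Set (ℤ × ℤ)} {p : ℤ × ℤ} (hp : IsCoprime p.1 p.2) :
    ¬∃ q ∈ G, ∃ r : ℝ, 0 < |r| ∧ |r| < 1 ∧
      ((q.1 : ℝ), (q.2 : ℝ)) = (r * p.1, r * p.2) := by
  rintro ⟨q, -, r, hr0, hr1, heq⟩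
  have h1 : (q.1:ℝ) = r * p.1 := congrArg Prod.fst heq
  have h2 : (q.2:ℝ) = r * p.2 := congrArg Prod.snd heq
  obtain ⟨m, hm, -, -⟩ := scalar_int hp h1 h2
  rw [← hm] at hr0 hr1
  have h0 : 0 < |m| := by exact_mod_cast (by simpa using hr0 : (0:ℝ) < |(m:ℤ)|)
  have h1' : |m| < 1 := by exact_mod_cast (by simpa using hr1 : (|(m:ℤ)| : ℝ) < 1)
  omega

/-- If a scaled-down copy of `p` (by a factor `g ≥ 2`) lies in `G`, then `p` is not
visible in `G`. -/
lemma not_visible_of_shrink {G : Set (ℤ × ℤ)} {p q : ℤ × ℤ} (hq : q ∈ G) {g : ℕ}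
    (hg : 2 ≤ g) (h1 : (g:ℤ) * q.1 = p.1) (h2 : (g:ℤ) * q.2 = p.2) :
    ¬ VisiblePt G p := by
  rintro ⟨-, hvis⟩
  apply hvis
  have hgR : (0:ℝ) < (g:ℝ) := by exact_mod_cast Nat.lt_of_lt_of_le two_pos hg
  refine ⟨q, hq, (g:ℝ)⁻¹, ?_, ?_, ?_⟩
  · rw [abs_of_pos (by positivity)]; positivity
  · rw [abs_of_pos (by positivity)]
    rw [inv_lt_one_iff₀]
    right; exact_mod_cast Nat.lt_of_lt_of_le one_lt_two hg
  · have e1 : (q.1:ℝ) = (g:ℝ)⁻¹ * p.1 := by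
      have : ((g:ℤ) * q.1 : ℤ) = (p.1 : ℤ) := h1
      have := congrArg (Int.cast : ℤ → ℝ) this
      push_cast at this
      field_simp
      linarith
    have e2 : (q.2:ℝ) = (g:ℝ)⁻¹ * p.2 := by
      have : ((g:ℤ) * q.2 : ℤ) = (p.2 : ℤ) := h2
      have := congrArg (Int.cast : ℤ → ℝ) this
      push_cast at this
      field_simp
      linarith
    exact Prod.ext e1 e2

/-- `G_{I^n}` is complete with respect to `ℤ²`: the visible points of
`ℤ²` having a nonzero (real) scalar multiple in `G_{I^n}` are exactly the visible
points of `G_{I^n}`. -/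
theorem GIn_complete (n : ℕ) (hn : 0 < n) :
    {p : ℤ × ℤ | VisiblePt Set.univ p ∧ ∃ r : ℝ, r ≠ 0 ∧
        ∃ q ∈ GIn n, ((q.1 : ℝ), (q.2 : ℝ)) = (r * p.1, r * p.2)} =
      {p : ℤ × ℤ | VisiblePt (GIn n) p} := by
  rcases eq_or_lt_of_le (Nat.succ_le_of_lt hn) with h1 | h2
  · -- n = 1 : GIn 1 = ∅, both sides empty
    have hempty : GIn n = ∅ := by
      ext v
      simp only [Set.mem_empty_iff_false, iff_false]
      rintro ⟨k, hk1, hk2, -⟩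
      omega
    ext p
    simp [hempty, VisiblePt]
  · have hn2 : 2 ≤ n := h2
    ext p
    simp only [Set.mem_setOf_eq]
    constructor
    · rintro ⟨⟨-, hvis⟩, r, hr0, q, hqG, heq⟩
      -- p is primitive since it is visible in ℤ²
      have hp : IsCoprime p.1 p.2 := by
        by_contra hcop
        have hg : Int.gcd p.1 p.2 ≠ 1 := fun h => hcop (Int.isCoprime_iff_gcd_eq_one.mpr h)
        rcases Nat.eq_zero_or_pos (Int.gcd p.1 p.2) with h0 | hpos
        · -- p = 0
          have hp1 : p.1 = 0 := by
            have := Int.gcd_eq_zero_iff.mp h0; exact this.1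
          have hp2 : p.2 = 0 := by
            have := Int.gcd_eq_zero_iff.mp h0; exact this.2
          exact hvis ⟨(0, 0), Set.mem_univ _, 1/2, by rw [abs_of_pos] <;> norm_num, by rw [abs_of_pos] <;> norm_num,
            by simp [hp1, hp2]⟩
        · set g := Int.gcd p.1 p.2 with hgdef
          have hg2 : 2 ≤ g := by omega
          have hd1 : (g:ℤ) ∣ p.1 := Int.gcd_dvd_left _ _
          have hd2 : (g:ℤ) ∣ p.2 := Int.gcd_dvd_right _ _
          obtain ⟨a, ha⟩ := hd1
          obtain ⟨b, hb⟩ := hd2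
          exact (not_visible_of_shrink (q := (a, b)) (Set.mem_univ _) hg2 ha.symm hb.symm)
            ⟨Set.mem_univ _, hvis⟩
      -- r is an integer m, q = m • p
      have h1 : (q.1:ℝ) = r * p.1 := congrArg Prod.fst heq
      have h2 : (q.2:ℝ) = r * p.2 := congrArg Prod.snd heq
      obtain ⟨m, hm, hq1, hq2⟩ := scalar_int hp h1 h2
      have hm0 : m ≠ 0 := by
        rintro rfl
        exact hr0 (by exact_mod_cast hm.symm)
      obtain ⟨hqc, hqd⟩ := (mem_GIn_iff hn2).mp hqG
      rw [hq1] at hqc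
      rw [hq2] at hqd
      have hpc : IsCoprime p.1 (n:ℤ) := hqc.of_mul_left_right
      have hmn : IsCoprime ((n:ℤ)) m := (hqc.of_mul_left_left).symm
      have hpd : (n:ℤ) ∣ p.2 := hmn.dvd_of_dvd_mul_left hqd
      have hpG : p ∈ GIn n := (mem_GIn_iff hn2).mpr ⟨hpc, hpd⟩
      exact ⟨hpG, coprime_no_shrink hp⟩
    · rintro ⟨hpG, hvis⟩
      obtain ⟨hpc, hpd⟩ := (mem_GIn_iff hn2).mp hpG
      -- p is primitive
      have hp : IsCoprime p.1 p.2 := by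
        by_contra hcop
        have hg : Int.gcd p.1 p.2 ≠ 1 := fun h => hcop (Int.isCoprime_iff_gcd_eq_one.mpr h)
        have hp1 : p.1 ≠ 0 := by
          rintro hp1
          rw [hp1] at hpc
          have hu : IsUnit (n:ℤ) := hpc.symm.isUnit_of_dvd' (dvd_refl _) (dvd_zero _)
          rw [Int.isUnit_iff] at hu
          omega
        have hpos : 0 < Int.gcd p.1 p.2 := Int.gcd_pos_of_ne_zero_left _ hp1
        set g := Int.gcd p.1 p.2 with hgdef
        have hg2 : 2 ≤ g := by omega
        obtain ⟨a, ha⟩ := (Int.gcd_dvd_left _ _ : (g:ℤ) ∣ p.1)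
        obtain ⟨b, hb⟩ := (Int.gcd_dvd_right _ _ : (g:ℤ) ∣ p.2)
        -- the shrunk point (a,b) is in GIn n
        have hgn : IsCoprime ((g:ℤ)) (n:ℤ) := by
          rw [ha] at hpc
          exact hpc.of_mul_left_left
        have hac : IsCoprime a (n:ℤ) := by
          rw [ha] at hpc
          exact hpc.of_mul_left_right
        have hbd : (n:ℤ) ∣ b := by
          rw [hb] at hpd
          exact hgn.symm.dvd_of_dvd_mul_left hpd
        have habG : (a, b) ∈ GIn n := (mem_GIn_iff hn2).mpr ⟨hac, hbd⟩
        exact not_visible_of_shrink habG hg2 ha.symm hb.symm ⟨hpG, hvis⟩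
      exact ⟨⟨Set.mem_univ _, coprime_no_shrink hp⟩, 1, one_ne_zero,
        p, hpG, by simp⟩
end

section
/- For every positive integer n, the point distribution G_{I^n} is closed: if l ∈ ℤ \ {0} and there exist x, y ∈ G_{I^n} with x = l y, then l·G_{I^n} ⊆ G_{I^n}. Moreover an integer l satisfies l·G_{I^n} ⊆ G_{I^n} if and only if gcd(l, n) = 1. -/
open Filter Real Topology

lemma gcd_of_memGIn {n : ℕ} {z : ℤ × ℤ} (hz : z ∈ GIn n) :
    IsCoprime z.1 (n : ℤ) ∧ (n : ℤ) ∣ z.2 := by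
  obtain ⟨k, hk1, hk2, hk3, ⟨t, ht⟩, hd2⟩ := hz
  refine ⟨?_, hd2⟩
  have hz1 : z.1 = (k : ℤ) + (n : ℤ) * t := by linarith
  rw [hz1]
  have hk : IsCoprime (k : ℤ) (n : ℤ) := by
    rw [Int.isCoprime_iff_gcd_eq_one, Int.gcd_natCast_natCast]; exact hk3
  exact hk.add_mul_left_left t

lemma memGIn_of_gcd {n : ℕ} (hn : 1 < n) {z : ℤ × ℤ}
    (h1 : IsCoprime z.1 (n : ℤ)) (h2 : (n : ℤ) ∣ z.2) : z ∈ GIn n := by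
  have hn0 : (0 : ℤ) < n := by exact_mod_cast Nat.lt_of_lt_of_le Nat.zero_lt_one hn.le
  set r : ℤ := z.1 % n with hr
  have hr0 : 0 ≤ r := Int.emod_nonneg _ hn0.ne'
  have hrn : r < n := Int.emod_lt_of_pos _ hn0
  have hz1 : z.1 = r + (n : ℤ) * (z.1 / n) := by
    rw [hr, Int.emod_def]; ring
  have hcr : IsCoprime r (n : ℤ) := by
    have := h1
    rw [hz1] at this
    have h' := this.add_mul_left_left (-(z.1 / n))
    simpa using h'
  have hgr : Int.gcd r n = 1 := Int.isCoprime_iff_gcd_eq_one.mp hcr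
  refine ⟨r.toNat, ?_, ?_, ?_, ?_, h2⟩
  · by_contra h
    have : r = 0 := by omega
    rw [this] at hgr
    simp [Int.gcd] at hgr
    omega
  · omega
  · have : ((r.toNat : ℤ)) = r := Int.toNat_of_nonneg hr0
    rw [← Int.gcd_natCast_natCast, this]
    exact hgr
  · have : ((r.toNat : ℤ)) = r := Int.toNat_of_nonneg hr0
    rw [this, hz1]
    exact ⟨z.1 / n, by ring⟩

/-- `G_{I^n}` is closed: if some nonzero integer `l` satisfies
`x = l • y` for points `x, y ∈ G_{I^n}`, then `l • G_{I^n} ⊆ G_{I^n}`; moreover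
`l • G_{I^n} ⊆ G_{I^n}` holds if and only if `gcd(l, n) = 1`. -/
theorem GIn_closed (n : ℕ) (hn : 0 < n) :
    (∀ l : ℤ, l ≠ 0 → (∃ x ∈ GIn n, ∃ y ∈ GIn n, x = l • y) →
      ∀ z ∈ GIn n, l • z ∈ GIn n) ∧
    (∀ l : ℤ, (∀ z ∈ GIn n, l • z ∈ GIn n) ↔ Int.gcd l n = 1) := by
  rcases eq_or_lt_of_le (show 1 ≤ n from hn) with h1 | hn2
  · -- n = 1
    have hone : n = 1 := h1.symm
    subst hone
    have hempty : GIn 1 = ∅ := by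
      ext z
      simp only [GIn, Set.mem_setOf_eq, Set.mem_empty_iff_false, iff_false]
      rintro ⟨k, hk1, hk2, -⟩
      omega
    constructor
    · intro l _ _ z hz
      rw [hempty] at hz
      exact absurd hz (Set.notMem_empty z)
    · intro l
      constructor
      · intro _; simp [Int.gcd]
      · intro _ z hz
        rw [hempty] at hz
        exact absurd hz (Set.notMem_empty z)
  · -- 1 < n
    have key : ∀ l : ℤ, Int.gcd l n = 1 → ∀ z ∈ GIn n, l • z ∈ GIn n := by
      intro l hl z hz
      obtain ⟨hc, hd⟩ := gcd_of_memGIn hz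
      have hlc : IsCoprime l (n : ℤ) := Int.isCoprime_iff_gcd_eq_one.mpr hl
      refine memGIn_of_gcd hn2 ?_ ?_
      · show IsCoprime (l * z.1) (n : ℤ)
        exact hlc.mul_left hc
      · show (n : ℤ) ∣ l * z.2
        exact hd.mul_left l
    have key2 : ∀ l : ℤ, (∀ z ∈ GIn n, l • z ∈ GIn n) → Int.gcd l n = 1 := by
      intro l h
      have h1 : ((1 : ℤ), (0 : ℤ)) ∈ GIn n :=
        memGIn_of_gcd hn2 (isCoprime_one_left) (dvd_zero _)
      have h2 := (gcd_of_memGIn (h _ h1)).1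
      have : IsCoprime l (n : ℤ) := by simpa using h2
      exact Int.isCoprime_iff_gcd_eq_one.mp this
    constructor
    · rintro l hl ⟨x, hx, y, hy, hxy⟩
      have hcx := (gcd_of_memGIn hx).1
      have hx1 : x.1 = l * y.1 := by rw [hxy]; rfl
      rw [hx1] at hcx
      have hcl : IsCoprime l (n : ℤ) := hcx.of_mul_left_left
      exact key l (Int.isCoprime_iff_gcd_eq_one.mp hcl)
    · intro l
      exact ⟨key2 l, key l⟩
end

section
/- Fix an integer n > 2 and let x = (p₁/n, p₂/n) with gcd(p₁, p₂, n) = 1. The group V = { ±A : A ∈ SL₂(ℤ), A·(p₁, p₂) ≡ (p₁, p₂) (mod n) } is a subgroup of SL₂(ℤ) of index (n²/2) ∏_{p | n prime}(1 − 1/p²). -/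
open Matrix MatrixGroups

set_option synthInstance.maxHeartbeats 1000000
set_option maxHeartbeats 1000000

noncomputable section
namespace VeechAux

/-- number of coprime pairs in `ZMod n × ZMod n` -/
def C (n : ℕ) : ℕ := Nat.card {z : ZMod n × ZMod n // IsCoprime z.1 z.2}

lemma isCoprime_prod {S T : Type*} [CommRing S] [CommRing T] {x y : S × T} :
    IsCoprime x y ↔ IsCoprime x.1 y.1 ∧ IsCoprime x.2 y.2 := by
  constructor
  · rintro ⟨a, b, hab⟩
    exact ⟨⟨a.1, b.1, congrArg Prod.fst hab⟩, ⟨a.2, b.2, congrArg Prod.snd hab⟩⟩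
  · rintro ⟨⟨a1, b1, h1⟩, ⟨a2, b2, h2⟩⟩
    exact ⟨(a1, a2), (b1, b2), Prod.ext h1 h2⟩

lemma isCoprime_map_iff {R R' : Type*} [CommRing R] [CommRing R'] (e : R ≃+* R') {x y : R} :
    IsCoprime (e x) (e y) ↔ IsCoprime x y :=
  ⟨fun h => by simpa using h.map e.symm.toRingHom, fun h => h.map e.toRingHom⟩

lemma C_mul {a b : ℕ} (hab : a.Coprime b) : C (a * b) = C a * C b := by
  classical
  set E := ZMod.chineseRemainder hab with hE
  have e1 : {z : ZMod (a*b) × ZMod (a*b) // IsCoprime z.1 z.2} ≃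
      {z : ZMod a × ZMod a // IsCoprime z.1 z.2} × {z : ZMod b × ZMod b // IsCoprime z.1 z.2} :=
  { toFun := fun z => by
      refine ⟨⟨((E z.1.1).1, (E z.1.2).1), ?_⟩, ⟨((E z.1.1).2, (E z.1.2).2), ?_⟩⟩
      · exact (isCoprime_prod.mp ((isCoprime_map_iff E).mpr z.2)).1
      · exact (isCoprime_prod.mp ((isCoprime_map_iff E).mpr z.2)).2
    invFun := fun uv =>
      ⟨(E.symm (uv.1.1.1, uv.2.1.1), E.symm (uv.1.1.2, uv.2.1.2)), by
        rw [← isCoprime_map_iff E]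
        simp only [RingEquiv.apply_symm_apply]
        exact isCoprime_prod.mpr ⟨uv.1.2, uv.2.2⟩⟩
    left_inv := fun z => by
      ext <;> simp
    right_inv := fun uv => by
      ext <;> simp }
  rw [C, Nat.card_congr e1, Nat.card_prod, C, C]


variable {p k : ℕ}

lemma pdvd (p k : ℕ) : p ∣ p ^ (k+1) := dvd_pow_self p (Nat.succ_ne_zero k)

lemma isCoprime_iff_not_both (hp : p.Prime) (x y : ZMod (p^(k+1))) :
    IsCoprime x y ↔
      ¬ (ZMod.castHom (pdvd p k) (ZMod p) x = 0 ∧ ZMod.castHom (pdvd p k) (ZMod p) y = 0) := by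
  haveI : Fact p.Prime := ⟨hp⟩
  haveI : NeZero (p ^ (k+1)) := ⟨pow_ne_zero _ hp.ne_zero⟩
  set f := ZMod.castHom (pdvd p k) (ZMod p)
  constructor
  · rintro ⟨a, b, hab⟩ ⟨h1, h2⟩
    have := congrArg f hab
    rw [_root_.map_add, _root_.map_mul, _root_.map_mul, h1, h2, mul_zero, mul_zero, add_zero, _root_.map_one] at this
    exact (one_ne_zero : (1 : ZMod p) ≠ 0) this.symm
  · intro hne
    have key : ∀ z w : ZMod (p^(k+1)), f z ≠ 0 → IsCoprime z w := by
      intro z w hz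
      have hzv : ((z.val : ℕ) : ZMod (p^(k+1))) = z := ZMod.natCast_rightInverse z
      have hfz : f z = ((z.val : ℕ) : ZMod p) := by rw [← hzv, map_natCast, hzv]
      have hnd : ¬ p ∣ z.val := by
        rw [← ZMod.natCast_eq_zero_iff, ← hfz]; exact hz
      have hcop : Nat.Coprime z.val (p ^ (k+1)) :=
        ((Nat.Prime.coprime_iff_not_dvd hp).mpr hnd).symm.pow_right _
      have : IsUnit z := by
        rw [← hzv]; exact (ZMod.isUnit_iff_coprime _ _).mpr hcop
      obtain ⟨u, rfl⟩ := this
      exact ⟨(u⁻¹ : _), 0, by simp⟩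
    rcases not_and_or.mp hne with hz | hw
    · exact key x y hz
    · exact (key y x hw).symm

lemma card_ker (hp : p.Prime) :
    Nat.card {x : ZMod (p^(k+1)) // ZMod.castHom (pdvd p k) (ZMod p) x = 0} = p ^ k := by
  haveI : Fact p.Prime := ⟨hp⟩
  haveI : NeZero (p ^ (k+1)) := ⟨pow_ne_zero _ hp.ne_zero⟩
  set f := (ZMod.castHom (pdvd p k) (ZMod p)).toAddMonoidHom with hf
  have hsurj : Function.Surjective f := by
    intro y
    exact ⟨((y.val : ℕ) : ZMod (p^(k+1))), by
      simp only [hf, RingHom.toAddMonoidHom_eq_coe, AddMonoidHom.coe_coe, map_natCast]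
      exact ZMod.natCast_rightInverse y⟩
  have h1 : Nat.card (ZMod (p^(k+1))) =
      Nat.card (ZMod (p^(k+1)) ⧸ f.ker) * Nat.card f.ker :=
    AddSubgroup.card_eq_card_quotient_mul_card_addSubgroup f.ker
  have h2 : Nat.card (ZMod (p^(k+1)) ⧸ f.ker) = Nat.card (ZMod p) :=
    Nat.card_congr (QuotientAddGroup.quotientKerEquivOfSurjective f hsurj).toEquiv
  rw [h2, Nat.card_zmod, Nat.card_zmod] at h1
  have hker : Nat.card {x : ZMod (p^(k+1)) // ZMod.castHom (pdvd p k) (ZMod p) x = 0}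
      = Nat.card f.ker := by
    apply Nat.card_congr
    exact Equiv.subtypeEquivRight (fun x => by simp [hf, AddMonoidHom.mem_ker])
  rw [hker]
  refine Nat.eq_of_mul_eq_mul_left hp.pos ?_
  rw [← pow_succ']
  exact h1.symm


lemma C_prime_pow (hp : p.Prime) : C (p^(k+1)) = p^(2*k+2) - p^(2*k) := by
  classical
  haveI : Fact p.Prime := ⟨hp⟩
  haveI : NeZero (p ^ (k+1)) := ⟨pow_ne_zero _ hp.ne_zero⟩
  set f := ZMod.castHom (pdvd p k) (ZMod p) with hf
  set Q := ZMod (p^(k+1))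
  -- the subtype of coprime pairs is the complement of the "both in kernel" pairs
  have e0 : {z : Q × Q // IsCoprime z.1 z.2} ≃ {z : Q × Q // ¬ (f z.1 = 0 ∧ f z.2 = 0)} :=
    Equiv.subtypeEquivRight (fun z => isCoprime_iff_not_both hp z.1 z.2)
  have eker : {z : Q × Q // f z.1 = 0 ∧ f z.2 = 0} ≃
      {x : Q // f x = 0} × {x : Q // f x = 0} :=
  { toFun := fun z => (⟨z.1.1, z.2.1⟩, ⟨z.1.2, z.2.2⟩)
    invFun := fun uv => ⟨(uv.1.1, uv.2.1), uv.1.2, uv.2.2⟩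
    left_inv := fun z => rfl
    right_inv := fun uv => rfl }
  have hcompl : Nat.card {z : Q × Q // ¬ (f z.1 = 0 ∧ f z.2 = 0)} =
      Nat.card (Q × Q) - Nat.card {z : Q × Q // f z.1 = 0 ∧ f z.2 = 0} := by
    rw [Nat.card_eq_fintype_card, Nat.card_eq_fintype_card, Nat.card_eq_fintype_card]
    rw [Fintype.card_subtype_compl]
  have hQ : Nat.card (Q × Q) = p^(2*k+2) := by
    rw [Nat.card_prod, Nat.card_zmod, ← pow_add]
    congr 1; ring
  have hK : Nat.card {z : Q × Q // f z.1 = 0 ∧ f z.2 = 0} = p^(2*k) := by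
    rw [Nat.card_congr eker, Nat.card_prod, card_ker hp, ← pow_add]
    congr 1; ring
  rw [C, Nat.card_congr e0, hcompl, hQ, hK]

lemma C_one : C 1 = 1 := by
  rw [C, Nat.card_eq_one_iff_unique]
  constructor
  · constructor
    intro a b
    apply Subtype.ext
    apply Subsingleton.elim
  · exact ⟨⟨(0,0), ⟨0, 0, Subsingleton.elim _ _⟩⟩⟩


lemma C_real (n : ℕ) (hn : 0 < n) :
    (C n : ℝ) = (n:ℝ)^2 * ∏ p ∈ n.primeFactors, (1 - 1/(p:ℝ)^2) := by
  induction n using Nat.recOnPosPrimePosCoprime with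
  | prime_pow p m hp hm =>
    obtain ⟨k, rfl⟩ := Nat.exists_eq_succ_of_ne_zero hm.ne'
    have hp' : p.Prime := hp
    rw [C_prime_pow hp', Nat.primeFactors_prime_pow (Nat.succ_ne_zero k) hp,
      Finset.prod_singleton]
    have hle : p^(2*k) ≤ p^(2*k+2) := Nat.pow_le_pow_right hp'.pos (by omega)
    rw [Nat.cast_sub hle]
    have hp0 : (p:ℝ) ≠ 0 := Nat.cast_ne_zero.mpr hp'.ne_zero
    push_cast
    field_simp
    simp only [Nat.succ_eq_add_one]
    ring
  | zero => omega
  | one => simp [C_one]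
  | coprime a b ha hb hab iha ihb =>
    have ha0 : 0 < a := by omega
    have hb0 : 0 < b := by omega
    rw [C_mul hab, hab.primeFactors_mul,
      Finset.prod_union hab.disjoint_primeFactors]
    push_cast
    rw [iha ha0, ihb hb0]
    ring


lemma core_lift (n : ℕ) (a b : ℤ) (ha : a ≠ 0)
    (h : ∃ u v w : ℤ, u * a + v * b + w * n = 1) :
    ∃ k : ℤ, IsCoprime a (b + k * n) := by
  set A := a.natAbs with hAdef
  have hA : 0 < A := Int.natAbs_pos.mpr ha
  set g := Nat.gcd A (n ^ A) with hgdef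
  set m := A / g with hmdef
  have hg : g ∣ A := Nat.gcd_dvd_left _ _
  have hmg : m * g = A := Nat.div_mul_cancel hg
  have hmA : m ∣ A := ⟨g, hmg.symm⟩
  -- m is coprime to n
  have hmn : Nat.Coprime m n := by
    by_contra hne
    obtain ⟨q, hq, hqd⟩ := Nat.exists_prime_and_dvd hne
    have hqm : q ∣ m := hqd.trans (Nat.gcd_dvd_left _ _)
    have hqn : q ∣ n := hqd.trans (Nat.gcd_dvd_right _ _)
    have hqA : q ∣ A := hqm.trans hmA
    set e := A.factorization q with hedef
    have hqe : q ^ e ∣ A := Nat.ordProj_dvd A q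
    have heA : e ≤ A := le_of_lt (lt_of_lt_of_le (Nat.lt_pow_self hq.one_lt : e < q ^ e)
      (Nat.le_of_dvd hA hqe))
    have hqeN : q ^ e ∣ n ^ A := (pow_dvd_pow q heA).trans (pow_dvd_pow_of_dvd hqn A)
    have hqg : q ^ e ∣ g := Nat.dvd_gcd hqe hqeN
    have : q ^ (e + 1) ∣ A := by
      rw [← hmg, pow_succ']
      exact mul_dvd_mul hqm hqg
    exact Nat.pow_succ_factorization_not_dvd hA.ne' hq this
  -- Bezout for m and n
  obtain ⟨x, y, hxy⟩ := (Nat.isCoprime_iff_coprime.mpr hmn : IsCoprime (m:ℤ) (n:ℤ))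
  refine ⟨y * (1 - b), ?_⟩
  have hmdvd : (m:ℤ) ∣ (b + (y * (1 - b)) * n - 1) :=
    ⟨(b - 1) * x, by linear_combination (1 - b) * hxy⟩
  rw [Int.isCoprime_iff_gcd_eq_one]
  by_contra hne
  obtain ⟨q, hq, hqd⟩ := Nat.exists_prime_and_dvd hne
  have hqa : (q:ℤ) ∣ a := hqd.natCast.trans (Int.gcd_dvd_left _ _)
  have hqb : (q:ℤ) ∣ b + (y * (1 - b)) * n := hqd.natCast.trans (Int.gcd_dvd_right _ _)
  by_cases hqn : q ∣ n
  · -- q divides a, b, n hence 1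
    have hqb' : (q:ℤ) ∣ b := by
      have : (q:ℤ) ∣ (y * (1 - b)) * n := Dvd.dvd.mul_left (Int.natCast_dvd_natCast.mpr hqn) _
      have := hqb.sub this
      simpa using this
    obtain ⟨u, v, w, huvw⟩ := h
    have : (q:ℤ) ∣ 1 := by
      rw [← huvw]
      exact dvd_add (dvd_add (hqa.mul_left u) (hqb'.mul_left v))
        ((Int.natCast_dvd_natCast.mpr hqn).mul_left w)
    have hq1 : (q:ℤ) = 1 := Int.eq_one_of_dvd_one (by positivity) this
    exact hq.one_lt.ne' (by exact_mod_cast hq1)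
  · -- q divides m, hence divides 1
    have hqA : q ∣ A := by
      rwa [hAdef, ← Int.natCast_dvd] 
    have hqng : ¬ q ∣ g := fun hc => hqn (hq.dvd_of_dvd_pow (hc.trans (Nat.gcd_dvd_right _ _)))
    have hqm : q ∣ m := by
      rcases (Nat.Prime.dvd_mul hq).mp (hmg ▸ hqA) with h' | h'
      · exact h'
      · exact absurd h' hqng
    have hq1 : (q:ℤ) ∣ 1 := by
      have h1 : (q:ℤ) ∣ (b + (y * (1 - b)) * n - 1) :=
        (Int.natCast_dvd_natCast.mpr hqm).trans hmdvd
      have := hqb.sub h1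
      simpa using this
    have hq2 : (q:ℤ) = 1 := Int.eq_one_of_dvd_one (by positivity) hq1
    exact hq.one_lt.ne' (by exact_mod_cast hq2)

lemma exists_coprime_lift (n : ℕ) (hn : 0 < n) (a b : ℤ)
    (h : ∃ u v w : ℤ, u * a + v * b + w * n = 1) :
    ∃ a' b' : ℤ, IsCoprime a' b' ∧ ((a' : ZMod n) = (a : ZMod n)) ∧
      ((b' : ZMod n) = (b : ZMod n)) := by
  set a₀ : ℤ := if a = 0 then (n:ℤ) else a with ha₀
  have ha0 : a₀ ≠ 0 := by
    by_cases hc : a = 0 <;> simp [ha₀, hc]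
    exact_mod_cast hn.ne'
  have h' : ∃ u v w : ℤ, u * a₀ + v * b + w * n = 1 := by
    obtain ⟨u, v, w, huvw⟩ := h
    by_cases hc : a = 0
    · refine ⟨0, v, w, ?_⟩
      rw [hc] at huvw
      linear_combination huvw
    · exact ⟨u, v, w, by rw [ha₀, if_neg hc]; exact huvw⟩
  obtain ⟨k, hk⟩ := core_lift n a₀ b ha0 h'
  refine ⟨a₀, b + k * n, hk, ?_, ?_⟩
  · by_cases hc : a = 0 <;> simp [ha₀, hc, ZMod.natCast_self]
  · push_cast
    rw [ZMod.natCast_self]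
    ring


abbrev SL2Z := Matrix.SpecialLinearGroup (Fin 2) ℤ

def π (n : ℕ) : Matrix (Fin 2) (Fin 2) ℤ →+* Matrix (Fin 2) (Fin 2) (ZMod n) :=
  (Int.castRingHom (ZMod n)).mapMatrix

instance mact (n : ℕ) : MulAction SL2Z (Fin 2 → ZMod n) where
  smul g w := (π n g.1) *ᵥ w
  one_smul w := show (π n (1 : SL2Z).1) *ᵥ w = w by
    rw [Matrix.SpecialLinearGroup.coe_one, _root_.map_one, Matrix.one_mulVec]
  mul_smul g h w := show (π n ((g*h) : SL2Z).1) *ᵥ w = (π n g.1) *ᵥ ((π n h.1) *ᵥ w) by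
    rw [Matrix.SpecialLinearGroup.coe_mul, _root_.map_mul, Matrix.mulVec_mulVec]

lemma smul_def {n : ℕ} (g : SL2Z) (w : Fin 2 → ZMod n) : g • w = (π n g.1) *ᵥ w := rfl

lemma smul_neg' {n : ℕ} (g : SL2Z) (w : Fin 2 → ZMod n) : g • (-w) = -(g • w) := by
  rw [smul_def, smul_def, Matrix.mulVec_neg]

lemma neg_smul' {n : ℕ} (g : SL2Z) (w : Fin 2 → ZMod n) : (-g) • w = -(g • w) := by
  rw [smul_def, smul_def]
  have : ((-g : SL2Z) : Matrix (Fin 2) (Fin 2) ℤ) = -(g : Matrix (Fin 2) (Fin 2) ℤ) := rfl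
  rw [this, _root_.map_neg, Matrix.neg_mulVec]

/-- reduction of an SL2Z matrix mod n as an element of SL(2, ZMod n) -/
def red (n : ℕ) (g : SL2Z) : Matrix.SpecialLinearGroup (Fin 2) (ZMod n) :=
  ⟨π n g.1, by rw [π, ← RingHom.map_det, g.2, _root_.map_one]⟩

lemma red_coe (n : ℕ) (g : SL2Z) : (red n g).1 = π n g.1 := rfl

lemma reach {n : ℕ} [NeZero n] (w : Fin 2 → ZMod n) (hw : IsCoprime (w 0) (w 1)) :
    ∃ g : SL2Z, g • (![1, 0] : Fin 2 → ZMod n) = w := by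
  have hn : 0 < n := Nat.pos_of_ne_zero (NeZero.ne n)
  obtain ⟨x, y, hxy⟩ := hw
  have hca : ((((w 0).val : ℤ)) : ZMod n) = w 0 := by
    push_cast; exact ZMod.natCast_rightInverse (w 0)
  have hcb : ((((w 1).val : ℤ)) : ZMod n) = w 1 := by
    push_cast; exact ZMod.natCast_rightInverse (w 1)
  have hcx : (((x.val : ℕ) : ℤ) : ZMod n) = x := by
    push_cast; exact ZMod.natCast_rightInverse x
  have hcy : (((y.val : ℕ) : ℤ) : ZMod n) = y := by
    push_cast; exact ZMod.natCast_rightInverse y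
  have hz : (((x.val : ℤ) * ((w 0).val : ℤ) + (y.val : ℤ) * ((w 1).val : ℤ) - 1 : ℤ)
      : ZMod n) = 0 := by
    push_cast only [Int.cast_sub, Int.cast_add, Int.cast_mul, Int.cast_one]
    rw [hcx, hca, hcy, hcb, hxy]
    ring
  rw [ZMod.intCast_zmod_eq_zero_iff_dvd] at hz
  obtain ⟨c, hc⟩ := hz
  have hbez : ∃ u v s : ℤ, u * ((w 0).val : ℤ) + v * ((w 1).val : ℤ) + s * n = 1 :=
    ⟨(x.val : ℤ), (y.val : ℤ), -c, by linarith⟩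
  obtain ⟨a', b', hab, ha', hb'⟩ := exists_coprime_lift n hn _ _ hbez
  obtain ⟨g, hg0, hg1⟩ := hab.exists_SL2_col 0
  refine ⟨g, ?_⟩
  funext i
  rw [smul_def]
  fin_cases i <;>
    simp only [π, RingHom.mapMatrix_apply, Matrix.mulVec, dotProduct,
      Fin.sum_univ_two, Matrix.cons_val_zero, Matrix.cons_val_one, Matrix.head_cons,
      Matrix.map_apply, Int.coe_castRingHom, mul_one, mul_zero, add_zero, Fin.zero_eta,
      Fin.mk_one]
  · rw [hg0, ha', hca]
  · rw [hg1, hb', hcb]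


end VeechAux

open VeechAux


/-- for `n > 2` and `gcd(p₁,p₂,n) = 1`, the set
`V = {±A : A ∈ SL₂(ℤ), A·(p₁,p₂) ≡ (p₁,p₂) (mod n)}`
(equivalently, matrices `M` with `M·(p₁,p₂) ≡ ±(p₁,p₂) (mod n)`) is a subgroup of
`SL₂(ℤ)` of index `(n²/2) ∏_{p | n prime}(1 − 1/p²)`. -/
theorem veech_group_index (n : ℕ) (hn : 2 < n) (p₁ p₂ : ℤ)
    (h : Int.gcd (Int.gcd p₁ p₂) n = 1) :
    ∃ V : Subgroup (Matrix.SpecialLinearGroup (Fin 2) ℤ),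
      (↑V : Set (Matrix.SpecialLinearGroup (Fin 2) ℤ)) =
        {M | ∃ A : Matrix.SpecialLinearGroup (Fin 2) ℤ,
          (A.1.mulVec ![p₁, p₂]) 0 ≡ p₁ [ZMOD n] ∧
          (A.1.mulVec ![p₁, p₂]) 1 ≡ p₂ [ZMOD n] ∧ (M = A ∨ M = -A)} ∧
      (V.index : ℝ) = (n : ℝ) ^ 2 / 2 * ∏ p ∈ n.primeFactors, (1 - 1 / (p : ℝ) ^ 2) := by
  classical
  haveI : NeZero n := ⟨by omega⟩
  have hn0 : 0 < n := by omega
  set v : Fin 2 → ZMod n := ![(p₁ : ZMod n), (p₂ : ZMod n)] with hvdef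
  have hv0 : v 0 = (p₁ : ZMod n) := rfl
  have hv1 : v 1 = (p₂ : ZMod n) := rfl
  -- v is a coprime pair
  have hv : IsCoprime (v 0) (v 1) := by
    have h1 : (Int.gcd p₁ p₂ : ℤ) = p₁ * Int.gcdA p₁ p₂ + p₂ * Int.gcdB p₁ p₂ :=
      Int.gcd_eq_gcd_ab p₁ p₂
    have h2 : ((Int.gcd (Int.gcd p₁ p₂) n : ℕ) : ℤ) =
        (Int.gcd p₁ p₂ : ℤ) * Int.gcdA (Int.gcd p₁ p₂) n + n * Int.gcdB (Int.gcd p₁ p₂) n :=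
      Int.gcd_eq_gcd_ab _ _
    rw [h, Nat.cast_one] at h2
    refine ⟨((Int.gcdA p₁ p₂ * Int.gcdA (Int.gcd p₁ p₂) n : ℤ) : ZMod n),
      ((Int.gcdB p₁ p₂ * Int.gcdA (Int.gcd p₁ p₂) n : ℤ) : ZMod n), ?_⟩
    rw [hv0, hv1]
    have : ((1 : ℤ) : ZMod n) = 1 := by push_cast; rfl
    calc _ = (((Int.gcdA p₁ p₂ * Int.gcdA (Int.gcd p₁ p₂) n) * p₁ +
          (Int.gcdB p₁ p₂ * Int.gcdA (Int.gcd p₁ p₂) n) * p₂ : ℤ) : ZMod n) := by push_cast; ring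
      _ = (((1 : ℤ) - n * Int.gcdB (Int.gcd p₁ p₂) n : ℤ) : ZMod n) := by
          congr 1
          linear_combination (-(Int.gcdA (Int.gcd p₁ p₂) n)) * h1 - h2
      _ = 1 := by push_cast [ZMod.natCast_self]; ring
  -- v ≠ -v
  have hvne : v ≠ -v := by
    intro hc
    obtain ⟨x, y, hxy⟩ := hv
    have h0 : v 0 + v 0 = 0 := by
      nth_rewrite 2 [congrFun hc 0]
      simp
    have h1 : v 1 + v 1 = 0 := by
      nth_rewrite 2 [congrFun hc 1]
      simp
    have h2 : (2 : ZMod n) = 0 := by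
      have : (2 : ZMod n) = 2 * (x * v 0 + y * v 1) := by rw [hxy]; ring
      rw [this]
      have e0 : (2 : ZMod n) * v 0 = 0 := by rw [two_mul, h0]
      have e1 : (2 : ZMod n) * v 1 = 0 := by rw [two_mul, h1]
      calc 2 * (x * v 0 + y * v 1) = x * (2 * v 0) + y * (2 * v 1) := by ring
        _ = 0 := by rw [e0, e1, mul_zero, mul_zero, add_zero]
    have : ((2 : ℕ) : ZMod n) = 0 := by exact_mod_cast h2
    rw [ZMod.natCast_eq_zero_iff] at this
    exact absurd (Nat.le_of_dvd (by norm_num) this) (by omega)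
  have hnegvne : -v ≠ v := fun hc => hvne hc.symm
  -- the orbit of v is the set of coprime pairs
  have orbit_eq : MulAction.orbit SL2Z v = {w | IsCoprime (w 0) (w 1)} := by
    ext w
    constructor
    · rintro ⟨g, rfl⟩
      have := hv.mulVecSL (red n g)
      rw [red_coe] at this
      simpa [smul_def] using this
    · intro hw
      obtain ⟨g₁, hg₁⟩ := reach w hw
      obtain ⟨g₀, hg₀⟩ := reach v hv
      refine ⟨g₁ * g₀⁻¹, ?_⟩
      show (g₁ * g₀⁻¹) • v = w
      rw [mul_smul, inv_smul_eq_iff.mpr hg₀.symm, hg₁]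
  -- the subgroup
  have Hmem_mul : ∀ g h' : SL2Z, (g • v = v ∨ g • v = -v) → (h' • v = v ∨ h' • v = -v) →
      ((g * h') • v = v ∨ (g * h') • v = -v) := by
    intro g h' hg hh
    rcases hg with hg | hg <;> rcases hh with hh | hh
    · left; rw [mul_smul, hh, hg]
    · right; rw [mul_smul, hh, smul_neg', hg]
    · right; rw [mul_smul, hh, hg]
    · left; rw [mul_smul, hh, smul_neg', hg, neg_neg]
  let H : Subgroup SL2Z := {
    carrier := {g : SL2Z | g • v = v ∨ g • v = -v}
    one_mem' := Or.inl (one_smul _ v)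
    mul_mem' := fun {g} {h'} hg hh => Hmem_mul g h' hg hh
    inv_mem' := by
      intro g hg
      rcases hg with hg | hg
      · left; exact inv_smul_eq_iff.mpr hg.symm
      · right
        have hgv : g • (-v) = v := by rw [smul_neg', hg, neg_neg]
        exact inv_smul_eq_iff.mpr hgv.symm
  }
  have hHmem : ∀ g : SL2Z, g ∈ H ↔ (g • v = v ∨ g • v = -v) := fun g => Iff.rfl
  -- bridge between integer congruences and the mod-n action
  have hcast : ∀ (A : SL2Z) (i : Fin 2),
      (((A.1.mulVec ![p₁, p₂]) i : ℤ) : ZMod n) = (A • v) i := by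
    intro A i
    rw [smul_def]
    fin_cases i <;>
      simp [π, Matrix.mulVec, dotProduct, Fin.sum_univ_two, hvdef,
        RingHom.mapMatrix_apply, Matrix.map_apply, Int.coe_castRingHom] <;>
      push_cast <;> ring
  have hcond : ∀ A : SL2Z,
      ((A.1.mulVec ![p₁, p₂]) 0 ≡ p₁ [ZMOD n] ∧ (A.1.mulVec ![p₁, p₂]) 1 ≡ p₂ [ZMOD n]) ↔
        A • v = v := by
    intro A
    constructor
    · rintro ⟨hA0, hA1⟩
      funext i
      fin_cases i
      · show (A • v) 0 = v 0
        rw [← hcast A 0, hv0]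
        exact_mod_cast (ZMod.intCast_eq_intCast_iff _ _ _).mpr hA0
      · show (A • v) 1 = v 1
        rw [← hcast A 1, hv1]
        exact_mod_cast (ZMod.intCast_eq_intCast_iff _ _ _).mpr hA1
    · intro hA
      constructor
      · rw [← ZMod.intCast_eq_intCast_iff]
        rw [hcast A 0, hA, hv0]
      · rw [← ZMod.intCast_eq_intCast_iff]
        rw [hcast A 1, hA, hv1]
  refine ⟨H, ?_, ?_⟩
  · -- set equality
    ext M
    simp only [SetLike.mem_coe, Set.mem_setOf_eq]
    rw [hHmem]
    constructor
    · rintro (hM | hM)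
      · exact ⟨M, ((hcond M).mpr hM).1, ((hcond M).mpr hM).2, Or.inl rfl⟩
      · have hMn : (-M) • v = v := by rw [neg_smul', hM, neg_neg]
        exact ⟨-M, ((hcond (-M)).mpr hMn).1, ((hcond (-M)).mpr hMn).2, Or.inr (neg_neg M).symm⟩
    · rintro ⟨A, hA0, hA1, hMA | hMA⟩
      · left; rw [hMA]; exact (hcond A).mp ⟨hA0, hA1⟩
      · right; rw [hMA, neg_smul', (hcond A).mp ⟨hA0, hA1⟩]
  · -- index computation
    set S := MulAction.stabilizer SL2Z v with hSdef
    have hSH : S ≤ H := fun g hg => (hHmem g).mpr (Or.inl hg)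
    have hne_of : ∀ {u : SL2Z}, u • v = -v → ¬ (u • v = v) :=
      fun hu hc => hnegvne (by rw [← hu, hc])
    let χ : H →* ℤˣ := {
      toFun := fun g => if (g : SL2Z) • v = v then (1 : ℤˣ) else -1
      map_one' := by
        show (if ((1 : H) : SL2Z) • v = v then (1 : ℤˣ) else -1) = 1
        rw [if_pos]
        show ((1 : H) : SL2Z) • v = v
        rw [OneMemClass.coe_one, one_smul]
      map_mul' := by
        intro g h'
        show (if ((g * h' : H) : SL2Z) • v = v then (1 : ℤˣ) else -1) =
          (if ((g : SL2Z)) • v = v then (1 : ℤˣ) else -1) *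
            (if ((h' : SL2Z)) • v = v then (1 : ℤˣ) else -1)
        rcases (hHmem ↑g).mp g.2 with hg | hg <;> rcases (hHmem ↑h').mp h'.2 with hh | hh
        · have hgh : ((↑(g * h') : SL2Z)) • v = v := by
            rw [Subgroup.coe_mul, mul_smul, hh, hg]
          rw [if_pos hgh, if_pos hg, if_pos hh]; norm_num
        · have hgh : ((↑(g * h') : SL2Z)) • v = -v := by
            rw [Subgroup.coe_mul, mul_smul, hh, smul_neg', hg]
          rw [if_neg (hne_of hgh), if_pos hg, if_neg (hne_of hh)]; norm_num
        · have hgh : ((↑(g * h') : SL2Z)) • v = -v := by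
            rw [Subgroup.coe_mul, mul_smul, hh, hg]
          rw [if_neg (hne_of hgh), if_neg (hne_of hg), if_pos hh]; norm_num
        · have hgh : ((↑(g * h') : SL2Z)) • v = v := by
            rw [Subgroup.coe_mul, mul_smul, hh, smul_neg', hg, neg_neg]
          rw [if_pos hgh, if_neg (hne_of hg), if_neg (hne_of hh)]; norm_num
    }
    have hker : χ.ker = S.subgroupOf H := by
      ext g
      rw [MonoidHom.mem_ker, Subgroup.mem_subgroupOf]
      show (if (g : SL2Z) • v = v then (1 : ℤˣ) else -1) = 1 ↔ (g : SL2Z) ∈ S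
      rw [hSdef, MulAction.mem_stabilizer_iff]
      by_cases hc : (g : SL2Z) • v = v
      · simp [hc]
      · simp only [hc, if_false, iff_false]
        decide
    have hsurj : Function.Surjective χ := by
      intro u
      rcases Int.units_eq_one_or u with rfl | rfl
      · exact ⟨1, map_one χ⟩
      · have hm1 : (-1 : SL2Z) • v = -v := by
          rw [show (-1 : SL2Z) = -(1 : SL2Z) from rfl, neg_smul', one_smul]
        refine ⟨⟨-1, (hHmem _).mpr (Or.inr hm1)⟩, ?_⟩
        show (if ((-1 : SL2Z)) • v = v then (1 : ℤˣ) else -1) = -1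
        rw [if_neg (hne_of hm1)]
    have hrel : S.relIndex H = 2 := by
      show (S.subgroupOf H).index = 2
      rw [← hker, Subgroup.index_ker, MonoidHom.range_eq_top.mpr hsurj, Subgroup.card_top,
        Nat.card_eq_fintype_card, Fintype.card_units_int]
    have e : {w : Fin 2 → ZMod n // IsCoprime (w 0) (w 1)} ≃
        {z : ZMod n × ZMod n // IsCoprime z.1 z.2} :=
      ⟨fun w => ⟨(w.1 0, w.1 1), w.2⟩,
       fun z => ⟨![z.1.1, z.1.2], by simpa using z.2⟩,
       fun w => Subtype.ext (funext fun i => by fin_cases i <;> rfl),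
       fun z => Subtype.ext (Prod.mk.eta)⟩
    have hSidx : S.index = C n := by
      rw [MulAction.index_stabilizer, orbit_eq, ← Nat.card_coe_set_eq, C]
      exact Nat.card_congr e
    have hH2 : 2 * H.index = C n := by
      rw [← hSidx, ← Subgroup.relIndex_mul_index hSH, hrel]
    have hCr := C_real n hn0
    have h2r : (2 : ℝ) * (H.index : ℝ) = (C n : ℝ) := by exact_mod_cast hH2
    rw [hCr] at h2r
    rw [show (n : ℝ) ^ 2 / 2 * ∏ p ∈ n.primeFactors, (1 - 1 / (p : ℝ) ^ 2) =
      ((n : ℝ) ^ 2 * ∏ p ∈ n.primeFactors, (1 - 1 / (p : ℝ) ^ 2)) / 2 by ring]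
    linarith

end
end

section
/- As n → ∞, the quantity ∏_{p | n prime}(1 − 1/p²)^{−1} · Σ_{i ∈ I^n} 1/i² converges to π²/6. -/
open Finset Real Filter Topology

noncomputable def indf (P : Finset ℕ) (j : ℕ) : ℝ :=
  if ∀ p ∈ P, ¬ p ∣ j then 1 / (j:ℝ)^2 else 0

lemma hasSum_indf (P : Finset ℕ) :
    (∀ p ∈ P, p.Prime) →
    HasSum (indf P) ((∏ p ∈ P, (1 - 1/(p:ℝ)^2)) * (π^2/6)) := by
  classical
  induction P using Finset.induction_on with
  | empty =>
    intro _
    have h : indf ∅ = fun j : ℕ => 1/(j:ℝ)^2 := by funext j; simp [indf]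
    rw [h, show (∏ p ∈ (∅:Finset ℕ), (1 - 1/(p:ℝ)^2)) * (π^2/6) = π^2/6 by simp]
    exact hasSum_zeta_two
  | @insert a s ha ih =>
    intro hP
    have hap : a.Prime := hP a (mem_insert_self a s)
    have hs : ∀ p ∈ s, p.Prime := fun p hp => hP p (mem_insert_of_mem hp)
    have hv := ih hs
    set v := (∏ p ∈ s, (1 - 1/(p:ℝ)^2)) * (π^2/6) with hvdef
    -- sum over multiples of a
    have hmul : HasSum (fun j => if a ∣ j then indf s j else 0) (v / (a:ℝ)^2) := by
      have hinj : Function.Injective (fun j : ℕ => a * j) :=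
        fun x y h => by
          have := Nat.eq_of_mul_eq_mul_left hap.pos h
          exact this
      rw [← hinj.hasSum_iff]
      · have : (fun j : ℕ => (if a ∣ a*j then indf s (a*j) else 0)) =
            fun j => (1/(a:ℝ)^2) * indf s j := by
          funext j
          have hd : a ∣ a * j := Dvd.intro j rfl
          rw [if_pos hd]
          unfold indf
          have hcond : (∀ p ∈ s, ¬ p ∣ a * j) ↔ (∀ p ∈ s, ¬ p ∣ j) := by
            constructor
            · intro h p hp hpj
              exact h p hp (hpj.mul_left a)
            · intro h p hp hpaj
              rcases (hs p hp).dvd_mul.mp hpaj with h1 | h2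
              · exact absurd (((Nat.prime_dvd_prime_iff_eq (hs p hp) hap).mp h1) ▸ hp) ha
              · exact h p hp h2
          rw [if_congr hcond rfl rfl]
          by_cases h : ∀ p ∈ s, ¬ p ∣ j
          · rw [if_pos h, if_pos h]
            push_cast
            field_simp
          · rw [if_neg h, if_neg h, mul_zero]
        rw [show v / (a:ℝ)^2 = (1/(a:ℝ)^2) * v by ring]
        have := this ▸ hv.mul_left (1/(a:ℝ)^2)
        exact this
      · intro x hx
        have : ¬ a ∣ x := by
          intro ⟨c, hc⟩
          exact hx ⟨c, hc.symm⟩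
        exact if_neg this
    have hdiff : HasSum (indf (insert a s)) (v - v/(a:ℝ)^2) := by
      have : indf (insert a s) = fun j => indf s j - (if a ∣ j then indf s j else 0) := by
        funext j
        unfold indf
        by_cases hd : a ∣ j
        · rw [if_pos hd]
          have : ¬ ∀ p ∈ insert a s, ¬ p ∣ j := by
            push_neg; exact ⟨a, mem_insert_self a s, hd⟩
          rw [if_neg this]; ring
        · rw [if_neg hd, sub_zero]
          have : (∀ p ∈ insert a s, ¬ p ∣ j) ↔ (∀ p ∈ s, ¬ p ∣ j) := by
            simp [Finset.forall_mem_insert, hd]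
          rw [if_congr this rfl rfl]
      rw [this]
      exact hv.sub hmul
    convert hdiff using 1
    rw [Finset.prod_insert ha, hvdef]
    ring
lemma coprime_iff_forall (n : ℕ) (hn : 1 ≤ n) (j : ℕ) :
    Nat.gcd j n = 1 ↔ ∀ p ∈ n.primeFactors, ¬ p ∣ j := by
  constructor
  · intro h p hp hpj
    have hpn : p ∣ n := Nat.dvd_of_mem_primeFactors hp
    have hpp : p.Prime := Nat.prime_of_mem_primeFactors hp
    have : p ∣ 1 := h ▸ Nat.dvd_gcd hpj hpn
    exact hpp.one_lt.ne' (Nat.dvd_one.mp this)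
  · intro h
    by_contra hg
    have hg0 : Nat.gcd j n ≠ 0 := by
      intro h0
      exact absurd ((Nat.gcd_eq_zero_iff.mp h0).2) (by omega)
    obtain ⟨p, hpp, hpd⟩ := Nat.exists_prime_and_dvd hg
    have hpn : p ∣ n := hpd.trans (Nat.gcd_dvd_right j n)
    have hpj : p ∣ j := hpd.trans (Nat.gcd_dvd_left j n)
    exact h p (Nat.mem_primeFactors.mpr ⟨hpp, hpn, by omega⟩) hpj

lemma prod_Icc_eq (m : ℕ) :
    ∏ k ∈ Icc 2 (m+1), (1 - 1/(k:ℝ)^2)⁻¹ = 2*(m+1)/((m:ℝ)+2) := by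
  induction m with
  | zero => norm_num
  | succ m ih =>
    rw [show m + 1 + 1 = (m+2) by ring, Finset.prod_Icc_succ_top (by omega), ih]
    have h1 : ((m:ℝ)+2) ≠ 0 := by positivity
    have h2 : (1 - 1/((m:ℕ)+2:ℝ)^2) ≠ 0 := by
      have : (1:ℝ)/((m:ℕ)+2:ℝ)^2 < 1 := by
        rw [div_lt_one (by positivity)]
        nlinarith [Nat.cast_nonneg (α := ℝ) m]
      intro h; rw [sub_eq_zero] at h; exact this.ne h.symm
    have h3 : ((m:ℝ)+3) ≠ 0 := by positivity
    push_cast at h2 ⊢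
    have h4 : (0:ℝ) < 6 + (m:ℝ) * 11 + (m:ℝ) ^ 2 * 6 + (m:ℝ) ^ 3 := by positivity
    field_simp
    have h5 : ((m:ℝ) + 2) * (((m:ℝ) + 1 + 1) ^ 2 - 1) ≠ 0 := by
      have hm : (0:ℝ) ≤ (m:ℝ) := Nat.cast_nonneg m
      nlinarith
    rw [div_eq_iff (by have hm : (0:ℝ) ≤ (m:ℝ) := Nat.cast_nonneg m; nlinarith)]
    ring

lemma indf_nonneg (P : Finset ℕ) (j : ℕ) : 0 ≤ indf P j := by
  unfold indf; split
  · positivity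
  · exact le_refl 0

lemma indf_le (P : Finset ℕ) (j : ℕ) : indf P j ≤ 1/(j:ℝ)^2 := by
  unfold indf; split
  · exact le_refl _
  · positivity

lemma prod_inv_le_two (n : ℕ) (hn : 1 ≤ n) :
    ∏ p ∈ n.primeFactors, ((1:ℝ) - 1/(p:ℝ)^2)⁻¹ ≤ 2 := by
  have hsub : n.primeFactors ⊆ Icc 2 n := by
    intro p hp
    have hpp := Nat.prime_of_mem_primeFactors hp
    have hle := Nat.le_of_dvd (by omega) (Nat.dvd_of_mem_primeFactors hp)
    exact Finset.mem_Icc.mpr ⟨hpp.two_le, hle⟩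
  have h1 : ∀ k ∈ Icc 2 n, (1:ℝ) ≤ (1 - 1/(k:ℝ)^2)⁻¹ := by
    intro k hk
    have hk2 : 2 ≤ k := (Finset.mem_Icc.mp hk).1
    have hk2' : (2:ℝ) ≤ (k:ℝ) := by exact_mod_cast hk2
    have hlt : (1:ℝ)/(k:ℝ)^2 < 1 := by
      rw [div_lt_one (by positivity)]
      nlinarith
    have hpos : 0 < 1 - 1/(k:ℝ)^2 := by linarith
    have hps : (0:ℝ) < 1/(k:ℝ)^2 := by positivity
    exact one_le_inv₀ hpos |>.mpr (by linarith)
  have hstep : ∏ p ∈ n.primeFactors, ((1:ℝ) - 1/(p:ℝ)^2)⁻¹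
      ≤ ∏ k ∈ Icc 2 n, ((1:ℝ) - 1/(k:ℝ)^2)⁻¹ := by
    rw [← Finset.prod_sdiff hsub]
    have hone : (1:ℝ) ≤ ∏ k ∈ Icc 2 n \ n.primeFactors, ((1:ℝ) - 1/(k:ℝ)^2)⁻¹ := by
      have := Finset.prod_le_prod (s := Icc 2 n \ n.primeFactors)
        (f := fun _ => (1:ℝ)) (g := fun k : ℕ => ((1:ℝ) - 1/(k:ℝ)^2)⁻¹)
        (fun i _ => zero_le_one) (fun i hi => h1 i (Finset.mem_sdiff.mp hi).1)
      rwa [Finset.prod_const_one] at this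
    have hnn : (0:ℝ) ≤ ∏ p ∈ n.primeFactors, ((1:ℝ) - 1/(p:ℝ)^2)⁻¹ := by
      apply Finset.prod_nonneg
      intro p hp
      have h2 := (Nat.prime_of_mem_primeFactors hp).two_le
      have h2' : (2:ℝ) ≤ (p:ℝ) := by exact_mod_cast h2
      have h3 : (1:ℝ)/(p:ℝ)^2 < 1 := by rw [div_lt_one (by positivity)]; nlinarith
      have h4 : (0:ℝ) < 1 - 1/(p:ℝ)^2 := by linarith
      exact le_of_lt (inv_pos.mpr h4)
    exact (le_mul_of_one_le_left hnn hone)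
  obtain ⟨m, rfl⟩ : ∃ m, n = m + 1 := ⟨n - 1, by omega⟩
  rw [prod_Icc_eq m] at hstep
  have hm : (0:ℝ) ≤ (m:ℝ) := Nat.cast_nonneg m
  have : 2*((m:ℝ)+1)/((m:ℝ)+2) ≤ 2 := by
    rw [div_le_iff₀ (by linarith)]; linarith
  linarith

/-- as `n → ∞`,
`∏_{p | n prime}(1 − 1/p²)⁻¹ · ∑_{i ∈ I^n} 1/i² → π²/6`. -/
theorem In_sum_tendsto :
    Tendsto (fun n : ℕ =>
      (∏ p ∈ n.primeFactors, ((1 : ℝ) - 1 / (p : ℝ) ^ 2)⁻¹) *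
        ∑ i ∈ (Finset.Ico 1 n).filter (fun i => Nat.gcd i n = 1), (1 : ℝ) / (i : ℝ) ^ 2)
      atTop (nhds (π ^ 2 / 6)) := by
  have hsumf : Summable (fun j : ℕ => 1/(j:ℝ)^2) := hasSum_zeta_two.summable
  set t : ℕ → ℝ := fun n => π^2/6 - ∑ j ∈ range n, 1/(j:ℝ)^2 with htdef
  have ht0 : Tendsto t atTop (𝓝 0) := by
    have h := hasSum_zeta_two.tendsto_sum_nat
    have h2 := (tendsto_const_nhds (x := π^2/6) (f := atTop (α := ℕ))).sub h
    rw [sub_self] at h2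
    exact h2
  have key : ∀ n : ℕ, 1 ≤ n →
      |(∏ p ∈ n.primeFactors, ((1:ℝ) - 1/(p:ℝ)^2)⁻¹) *
        (∑ i ∈ (Finset.Ico 1 n).filter (fun i => Nat.gcd i n = 1), (1:ℝ)/(i:ℝ)^2)
        - π^2/6| ≤ 2 * t n := by
    intro n hn
    have hprime : ∀ p ∈ n.primeFactors, p.Prime := fun p hp => Nat.prime_of_mem_primeFactors hp
    set P := ∏ p ∈ n.primeFactors, ((1:ℝ) - 1/(p:ℝ)^2)⁻¹ with hPdef
    set Q := ∏ p ∈ n.primeFactors, ((1:ℝ) - 1/(p:ℝ)^2) with hQdef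
    have hfact : ∀ p ∈ n.primeFactors, 0 < 1 - 1/(p:ℝ)^2 := by
      intro p hp
      have h2 := (hprime p hp).two_le
      have h2' : (2:ℝ) ≤ (p:ℝ) := by exact_mod_cast h2
      have : (1:ℝ)/(p:ℝ)^2 < 1 := by rw [div_lt_one (by positivity)]; nlinarith
      linarith
    have hPQ : P * Q = 1 := by
      rw [hPdef, hQdef, ← Finset.prod_mul_distrib]
      exact Finset.prod_eq_one fun p hp => inv_mul_cancel₀ (hfact p hp).ne'
    have hP0 : 0 ≤ P :=
      Finset.prod_nonneg fun p hp => le_of_lt (inv_pos.mpr (hfact p hp))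
    have hP2 : P ≤ 2 := prod_inv_le_two n hn
    have hHS := hasSum_indf n.primeFactors hprime
    -- rewrite the finite sum
    have h0 : ∀ j, indf n.primeFactors j = if Nat.gcd j n = 1 then 1/(j:ℝ)^2 else 0 := by
      intro j
      unfold indf
      exact if_congr ((coprime_iff_forall n hn j).symm) rfl rfl
    have hS : (∑ i ∈ (Finset.Ico 1 n).filter (fun i => Nat.gcd i n = 1), (1:ℝ)/(i:ℝ)^2)
        = ∑ j ∈ range n, indf n.primeFactors j := by
      rw [Finset.sum_filter]
      simp only [h0]
      rw [Finset.range_eq_Ico, Finset.sum_eq_sum_Ico_succ_bot (by omega : 0 < n)]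
      have hz : (if Nat.gcd 0 n = 1 then (1:ℝ)/((0:ℕ):ℝ)^2 else 0) = 0 := by
        split <;> norm_num
      rw [hz, zero_add]
    have hTail := Summable.sum_add_tsum_subtype_compl hHS.summable (range n)
    set R := ∑' (x : {x : ℕ // x ∉ range n}), indf n.primeFactors ↑x with hRdef
    have hR0 : 0 ≤ R := tsum_nonneg fun x => indf_nonneg _ _
    have hRle : R ≤ t n := by
      have h1 := Summable.sum_add_tsum_subtype_compl hsumf (range n)
      have h2 : (∑' j : ℕ, 1/(j:ℝ)^2) = π^2/6 := hasSum_zeta_two.tsum_eq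
      show R ≤ π^2/6 - ∑ j ∈ range n, 1/(j:ℝ)^2
      have h3 : (∑' (x : {x : ℕ // x ∉ range n}), 1/((x:ℕ):ℝ)^2)
          = π^2/6 - ∑ j ∈ range n, 1/(j:ℝ)^2 := by
        rw [h2] at h1; linarith
      rw [← h3, hRdef]
      exact Summable.tsum_le_tsum (fun x => indf_le _ _)
        (hHS.summable.subtype _) (hsumf.subtype _)
    have hFeq : Q * (π^2/6) = (∑ j ∈ range n, indf n.primeFactors j) + R := by
      rw [← hHS.tsum_eq, ← hTail]
    have hkey : P * (∑ i ∈ (Finset.Ico 1 n).filter (fun i => Nat.gcd i n = 1), (1:ℝ)/(i:ℝ)^2)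
        - π^2/6 = -(P * R) := by
      rw [hS]
      have : π^2/6 = P * (Q * (π^2/6)) := by rw [← mul_assoc, hPQ, one_mul]
      rw [this, hFeq]
      ring
    rw [hkey, abs_neg, abs_of_nonneg (mul_nonneg hP0 hR0)]
    have ht0' : 0 ≤ t n := by
      have hle := Summable.sum_le_tsum (range n) (fun j (_ : j ∉ range n) => by positivity) hsumf
      rw [hasSum_zeta_two.tsum_eq] at hle
      show (0:ℝ) ≤ π^2/6 - ∑ j ∈ range n, 1/(j:ℝ)^2
      linarith
    calc P * R ≤ 2 * R := mul_le_mul_of_nonneg_right hP2 hR0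
      _ ≤ 2 * t n := by linarith
  rw [← tendsto_sub_nhds_zero_iff]
  have h2t : Tendsto (fun n => 2 * t n) atTop (𝓝 0) := by
    have h := ht0.const_mul (2:ℝ)
    rw [mul_zero] at h
    exact h
  apply squeeze_zero_norm' ?_ h2t
  filter_upwards [eventually_ge_atTop 1] with n hn
  simp only [Real.norm_eq_abs]
  exact key n hn
end

section
/- For n coprime to i with 1 ≤ i ≤ n−1, the line segment in ℝ² from (0,0) to (i,n) contains exactly one point of the set (1/n, 0) + ℤ², namely the point (x·i/n, x) where x is the unique element of {1,…,n−1} with x·i ≡ 1 (mod n). -/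
/-- for `n ≥ 2`, `1 ≤ i ≤ n−1` with `gcd(i,n) = 1`, the open segment
from `(0,0)` to `(i,n)` meets the set `(1/n, 0) + ℤ²` in exactly one point, namely
`(x·i/n, x)` where `x ∈ {1,…,n−1}` satisfies `x·i ≡ 1 (mod n)`. -/
theorem unique_lattice_point_on_segment (n i : ℕ) (hn : 2 ≤ n)
    (hi : 1 ≤ i ∧ i ≤ n - 1) (hcop : Nat.gcd i n = 1)
    (x : ℕ) (hx : 1 ≤ x ∧ x ≤ n - 1) (hxi : x * i % n = 1) :
    {p : ℝ × ℝ | (∃ t : ℝ, 0 < t ∧ t < 1 ∧ p = (t * i, t * n)) ∧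
        ∃ k m : ℤ, p = (1 / (n : ℝ) + k, (m : ℝ))} =
      {((x * i : ℕ) / (n : ℝ), (x : ℝ))} := by
  obtain ⟨hi1, hi2⟩ := hi
  obtain ⟨hx1, hx2⟩ := hx
  have hn0 : (0:ℝ) < n := by positivity
  have hdm := Nat.div_add_mod (x * i) n
  rw [hxi] at hdm
  ext p
  simp only [Set.mem_setOf_eq, Set.mem_singleton_iff]
  constructor
  · rintro ⟨⟨t, ht0, ht1, rfl⟩, k, m, hp⟩
    have h1 : t * i = 1 / (n:ℝ) + k := congrArg Prod.fst hp
    have h2 : t * n = (m:ℝ) := congrArg Prod.snd hp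
    -- h2 : t * n = m
    have ht : t = (m : ℝ) / n := by field_simp; linarith
    have hm0 : (0:ℝ) < m := by rw [← h2]; positivity
    have hmn : (m : ℝ) < n := by
      rw [← h2]; nlinarith
    have hm0' : 0 < m := by exact_mod_cast hm0
    have hmn' : m < (n : ℤ) := by exact_mod_cast hmn
    have key : (m : ℝ) * i = 1 + k * n := by
      have h1' : (m : ℝ) / n * i = 1 / n + k := by rw [← ht]; exact h1
      field_simp at h1'
      linarith
    have keyz : m * (i : ℤ) = 1 + k * n := by exact_mod_cast key
    have hdvd : (n : ℤ) ∣ (m - x) * i := by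
      refine ⟨k - (x * i / n : ℕ), ?_⟩
      have hdm' : (n : ℤ) * (x * i / n : ℕ) + 1 = (x : ℤ) * i := by exact_mod_cast hdm
      ring_nf
      nlinarith [keyz, hdm']
    have hcop' : IsCoprime (n : ℤ) (i : ℤ) := by
      rw [Int.isCoprime_iff_gcd_eq_one, Int.gcd_natCast_natCast, Nat.gcd_comm]
      exact hcop
    obtain ⟨c, hc⟩ := hcop'.dvd_of_dvd_mul_right hdvd
    have hxn : (x : ℤ) < n := by
      have : x < n := by omega
      exact_mod_cast this
    have hmx : m = (x : ℤ) := by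
      have hx0 : (0:ℤ) < x := by exact_mod_cast hx1
      have h0 : m - (x:ℤ) = 0 :=
        Int.eq_zero_of_abs_lt_dvd ⟨c, hc⟩ (by rw [abs_lt]; omega)
      omega
    have htx : t = (x : ℝ) / n := by rw [ht, hmx]; push_cast; ring
    rw [hp, hmx]
    have key' : (x : ℝ) * i = 1 + k * n := by
      rw [hmx] at key; exact_mod_cast key
    rw [Prod.mk.injEq]
    refine ⟨?_, by norm_num⟩
    push_cast
    field_simp
    linarith
  · rintro rfl
    constructor
    · refine ⟨(x : ℝ) / n, by positivity, ?_, ?_⟩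
      · rw [div_lt_one hn0]
        have : x < n := by omega
        exact_mod_cast this
      · push_cast
        rw [Prod.mk.injEq]
        constructor <;> field_simp
    · refine ⟨(x * i / n : ℕ), x, ?_⟩
      have hdm' : (n : ℝ) * (x * i / n : ℕ) + 1 = (x : ℝ) * i := by exact_mod_cast hdm
      rw [Prod.mk.injEq]
      refine ⟨?_, rfl⟩
      rw [Int.cast_natCast]
      field_simp
      linarith [hdm', Nat.cast_mul (α := ℝ) x i]
end

section
/- Let y ∈ [0,1)² be a point with y ∉ ℚ², and suppose x ∈ [0,1)² and integers m₁, n₁, m₂, n₂, k₁, l₁, k₂, l₂ and rationals p₁/q₁, p₂/q₂ ∈ (0,1) satisfy x + (m₁,n₁) = (p₁/q₁)(y + (k₁,l₁)) and x + (m₂,n₂) = (p₂/q₂)(y + (k₂,l₂)). Then p₁/q₁ = p₂/q₂. -/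
/-- if `y ∈ [0,1)²` is not rational and two saddle connections to `x`
rationally divide saddle connections to `y`, i.e.
`x + (m₁,n₁) = (p₁/q₁)(y + (k₁,l₁))` and `x + (m₂,n₂) = (p₂/q₂)(y + (k₂,l₂))` with
stretch factors `r₁ = p₁/q₁, r₂ = p₂/q₂ ∈ (0,1)`, then the stretch factors agree. -/
theorem common_stretch_factor (y : ℝ × ℝ)
    (hy1 : y.1 ∈ Set.Ico (0 : ℝ) 1) (hy2 : y.2 ∈ Set.Ico (0 : ℝ) 1)
    (hyirr : ¬∃ a b : ℚ, y = ((a : ℝ), (b : ℝ)))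
    (x : ℝ × ℝ) (hx1 : x.1 ∈ Set.Ico (0 : ℝ) 1) (hx2 : x.2 ∈ Set.Ico (0 : ℝ) 1)
    (m₁ n₁ m₂ n₂ k₁ l₁ k₂ l₂ : ℤ) (r₁ r₂ : ℚ)
    (hr₁ : 0 < r₁ ∧ r₁ < 1) (hr₂ : 0 < r₂ ∧ r₂ < 1)
    (h₁a : x.1 + m₁ = r₁ * (y.1 + k₁)) (h₁b : x.2 + n₁ = r₁ * (y.2 + l₁))
    (h₂a : x.1 + m₂ = r₂ * (y.1 + k₂)) (h₂b : x.2 + n₂ = r₂ * (y.2 + l₂)) :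
    r₁ = r₂ := by
  by_contra h
  have hd : ((r₁ : ℝ) - r₂) ≠ 0 := by
    intro hc
    apply h
    exact_mod_cast sub_eq_zero.mp hc
  apply hyirr
  refine ⟨(m₁ - m₂ - r₁ * k₁ + r₂ * k₂) / (r₁ - r₂),
          (n₁ - n₂ - r₁ * l₁ + r₂ * l₂) / (r₁ - r₂), ?_⟩
  have e1 : y.1 = ((m₁ - m₂ - r₁ * k₁ + r₂ * k₂) / (r₁ - r₂) : ℚ) := by
    push_cast
    field_simp
    nlinarith [h₁a, h₂a]
  have e2 : y.2 = ((n₁ - n₂ - r₁ * l₁ + r₂ * l₂) / (r₁ - r₂) : ℚ) := by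
    push_cast
    field_simp
    nlinarith [h₁b, h₂b]
  exact Prod.ext e1 e2
end
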